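/- Let X ⊆ A^ℤ be a minimal subshift. A monoid morphism c : A* → (ℝ,+) is a letter-coboundary on X if and only if there exists a map ρ : A → ℝ such that c(a) = ρ(b) − ρ(a) for every word ab of length 2 in L(X). -/

import Mathlib

open Filter Topology MeasureTheory

namespace SAdicPaper

variable {A B : Type*}

/-! ### Basic symbolic dynamics on the full shift `ℤ → A` -/

/-- The shift map `S` on the full shift. -/
def shift (x : ℤ → A) : ℤ → A := fun n => x (n + 1)

/-- The iterate `S^k` of the shift, for `k : ℤ`. -/
def shiftIter (k : ℤ) (x : ℤ → A) : ℤ → A := fun n => x (n + k)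

/-- The finite word `x_i x_{i+1} ⋯ x_{i+l-1}`. -/
def window (x : ℤ → A) (i : ℤ) (l : ℕ) : List A :=
  (List.range l).map fun k => x (i + (k : ℤ))

/-- A subshift: a closed shift-invariant subset of the full shift. -/
def IsSubshift [TopologicalSpace A] (X : Set (ℤ → A)) : Prop :=
  IsClosed X ∧ shift '' X = X

/-- The language of a set of bi-infinite sequences: all finite factors of its points. -/
def langOf (X : Set (ℤ → A)) : Set (List A) :=
  {w | ∃ x ∈ X, ∃ i : ℤ, w = window x i w.length}

/-- The (two-sided) orbit of a point under the shift. -/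
def orbit (x : ℤ → A) : Set (ℤ → A) := Set.range fun k : ℤ => shiftIter k x

/-- A minimal subshift: nonempty and every orbit is dense. -/
def IsMinimalSubshift [TopologicalSpace A] (X : Set (ℤ → A)) : Prop :=
  IsSubshift X ∧ X.Nonempty ∧ ∀ x ∈ X, X ⊆ closure (orbit x)

/-- A transitive subshift: some orbit is dense. -/
def IsTransitiveSubshift [TopologicalSpace A] (X : Set (ℤ → A)) : Prop :=
  IsSubshift X ∧ ∃ x ∈ X, X ⊆ closure (orbit x)

/-- `α` is a continuous additive eigenvalue of `(X, S)`: there is a continuous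
`g : X → ℝ/ℤ` with `g (S x) = g x + α (mod ℤ)`. -/
def IsEigenvalue [TopologicalSpace A] (X : Set (ℤ → A)) (α : ℝ) : Prop :=
  ∃ g : (ℤ → A) → AddCircle (1 : ℝ), ContinuousOn g X ∧
    ∀ x ∈ X, g (shift x) = g x + (α : AddCircle (1 : ℝ))

/-- `‖x‖`: distance from a real number to the nearest integer. -/
noncomputable def dnint (x : ℝ) : ℝ := |x - round x|

/-- `{x}`: the centered fractional part, the unique element of `[-1/2, 1/2)`
such that `x + {x}` is an integer. -/
noncomputable def cfrac (x : ℝ) : ℝ := (⌈x - 1 / 2⌉ : ℤ) - x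

/-- The cylinder `[u] = {x ∈ X : x_{[0,|u|)} = u}`. -/
def cyl (X : Set (ℤ → A)) (u : List A) : Set (ℤ → A) :=
  {x ∈ X | window x 0 u.length = u}

/-- The factor complexity `p_X(n)`. -/
noncomputable def pcomplex (X : Set (ℤ → A)) (n : ℕ) : ℕ :=
  Set.ncard {w : List A | w ∈ langOf X ∧ w.length = n}

/-! ### Letter-coboundaries -/

/-- The extension of a map `c : A → ℝ` to the monoid morphism `A* → (ℝ, +)`. -/
def wsum (c : A → ℝ) (w : List A) : ℝ := (w.map c).sum

/-- `w` is a return word to the letter `a` in `X`: `w ++ [a] ∈ L(X)` and `w ++ [a]`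
contains exactly two occurrences of `a`, one as a prefix and one as a suffix. -/
def IsReturnWord (X : Set (ℤ → A)) (a : A) (w : List A) : Prop :=
  w ++ [a] ∈ langOf X ∧ w.head? = some a ∧
    ∀ (i : ℕ) (h : i < w.length), 0 < i → w.get ⟨i, h⟩ ≠ a

/-- A letter-coboundary on `X` (identified with its values on letters):
a morphism `A* → (ℝ, +)` vanishing on all return words to letters. -/
def IsLetterCoboundary (X : Set (ℤ → A)) (c : A → ℝ) : Prop :=
  ∀ (a : A) (w : List A), IsReturnWord X a w → wsum c w = 0

/-- `w` is a return word to the (nonempty) word `u` in `X`. -/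
def IsReturnWordTo (X : Set (ℤ → A)) (u w : List A) : Prop :=
  w ≠ [] ∧ (w ++ u) ∈ langOf X ∧ u <+: (w ++ u) ∧
    ∀ i : ℕ, ((w ++ u).drop i).take u.length = u → i + u.length ≤ (w ++ u).length →
      i = 0 ∨ i = w.length

/-! ### Extension graphs -/

/-- Vertices of the extension graph of `w`: two copies of the alphabet, restricted to the
letters that extend `w` on the corresponding side. -/
def extVertex (X : Set (ℤ → A)) (w : List A) : A ⊕ A → Prop
  | Sum.inl a => (a :: w) ∈ langOf X
  | Sum.inr b => (w ++ [b]) ∈ langOf X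

/-- The edge relation of the extension graph: `a_L — b_R` when `a w b ∈ L(X)`. -/
def extAdjRaw (X : Set (ℤ → A)) (w : List A) (u v : A ⊕ A) : Prop :=
  ∃ a b, u = Sum.inl a ∧ v = Sum.inr b ∧ (a :: (w ++ [b])) ∈ langOf X

/-- The extension graph `Γ_X(w)` of a word `w` in `X`. -/
def extGraph (X : Set (ℤ → A)) (w : List A) :
    SimpleGraph {v : A ⊕ A // extVertex X w v} where
  Adj u v := extAdjRaw X w u.1 v.1 ∨ extAdjRaw X w v.1 u.1
  symm := ⟨fun u v h => Or.symm h⟩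
  loopless := ⟨by
    rintro ⟨v, hv⟩ h
    rcases h with ⟨a, b, h1, h2, -⟩ | ⟨a, b, h1, h2, -⟩ <;> (rw [h1] at h2; simp at h2)⟩

/-- The total number of connected components of the extension graphs of all
words of length `m` in `L(X)`. -/
noncomputable def totalComponents (X : Set (ℤ → A)) (m : ℕ) : ℕ :=
  Nat.card (Σ w : {w : List A // w ∈ langOf X ∧ w.length = m},
    (extGraph X w.1).ConnectedComponent)

/-! ### The vector space of letter-coboundaries -/

lemma wsum_zero (w : List A) : wsum (0 : A → ℝ) w = 0 := by
  induction w with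
  | nil => rfl
  | cons a t ih => simp [wsum, List.map_cons, List.sum_cons] at ih ⊢; exact ih

lemma wsum_add (c d : A → ℝ) (w : List A) :
    wsum (c + d) w = wsum c w + wsum d w := by
  induction w with
  | nil => simp [wsum]
  | cons a t ih =>
      simp only [wsum, List.map_cons, List.sum_cons, Pi.add_apply] at ih ⊢
      rw [ih]; ring

lemma wsum_smul (r : ℝ) (c : A → ℝ) (w : List A) :
    wsum (r • c) w = r * wsum c w := by
  induction w with
  | nil => simp [wsum]
  | cons a t ih =>
      simp only [wsum, List.map_cons, List.sum_cons, Pi.smul_apply, smul_eq_mul] at ih ⊢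
      rw [ih]; ring

/-- The `ℝ`-vector space `C_X` of letter-coboundaries on `X`. -/
def cobSpace (X : Set (ℤ → A)) : Submodule ℝ (A → ℝ) where
  carrier := {c | IsLetterCoboundary X c}
  zero_mem' := fun _ w _ => wsum_zero w
  add_mem' := by
    intro c d hc hd a w hw
    rw [wsum_add, hc a w hw, hd a w hw, add_zero]
  smul_mem' := by
    intro r c hc a w hw
    rw [wsum_smul, hc a w hw, mul_zero]

/-! ### Directive sequences -/

variable {Alph : ℕ → Type*}

/-- `seg τ n k = τ_{n,n+k} = τ_n ∘ τ_{n+1} ∘ ⋯ ∘ τ_{n+k-1}`, applied to a letter. -/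
def seg (τ : ∀ n, Alph (n + 1) → List (Alph n)) (n : ℕ) :
    (k : ℕ) → Alph (n + k) → List (Alph n)
  | 0, a => [a]
  | k + 1, a => (τ (n + k) a).flatMap (seg τ n k)

/-- `toZero τ n = τ_{0,n}`, applied to a letter. -/
def toZero (τ : ∀ n, Alph (n + 1) → List (Alph n)) :
    (n : ℕ) → Alph n → List (Alph 0)
  | 0, a => [a]
  | n + 1, a => (τ n a).flatMap (toZero τ n)

/-- The height `h_n(u) = |τ_{0,n}(u)|` (so `h_0(u) = |u|`). -/
def heightW (τ : ∀ n, Alph (n + 1) → List (Alph n)) (n : ℕ) (u : List (Alph n)) : ℕ :=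
  (u.flatMap (toZero τ n)).length

/-- Every `τ_n` is a substitution: non-erasing and letter-onto. -/
def IsDirective (τ : ∀ n, Alph (n + 1) → List (Alph n)) : Prop :=
  ∀ n, (∀ a : Alph (n + 1), τ n a ≠ []) ∧ ∀ b : Alph n, ∃ a : Alph (n + 1), b ∈ τ n a

/-- The level-`n` language `L^{(n)}_τ`: the words occurring in some `τ_{n,m}(a)`, `m > n`. -/
def levelLang (τ : ∀ n, Alph (n + 1) → List (Alph n)) (n : ℕ) : Set (List (Alph n)) :=
  {w | ∃ k : ℕ, 0 < k ∧ ∃ a : Alph (n + k), w <:+: seg τ n k a}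

/-- The level-`n` subshift `X^{(n)}_τ`: the points all of whose factors lie in `L^{(n)}_τ`.
`X_τ = levelShift τ 0`. -/
def levelShift (τ : ∀ n, Alph (n + 1) → List (Alph n)) (n : ℕ) : Set (ℤ → Alph n) :=
  {x | ∀ (i : ℤ) (l : ℕ), window x i l ∈ levelLang τ n}

/-- Primitivity of a directive sequence. -/
def IsPrimitiveSeq (τ : ∀ n, Alph (n + 1) → List (Alph n)) : Prop :=
  ∀ n, ∃ k, 0 < k ∧ ∀ (a : Alph (n + k)) (b : Alph n), b ∈ seg τ n k a

/-- Positivity of a directive sequence: every letter of `A_n` occurs in every `τ_n(b)`. -/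
def IsPositiveSeq (τ : ∀ n, Alph (n + 1) → List (Alph n)) : Prop :=
  ∀ (n : ℕ) (b : Alph (n + 1)) (a : Alph n), a ∈ τ n b

/-- `y` is the image of the bi-infinite sequence `x` under the substitution `σ`,
aligned so that `σ(x_0)` starts at position `0`. -/
def SubstPoint (σ : B → List A) (x : ℤ → B) (y : ℤ → A) : Prop :=
  ∀ m : ℕ,
    window y (-(∑ t ∈ Finset.range m, ((σ (x (-1 - (t : ℤ)))).length : ℤ)))
        ((window x (-(m : ℤ)) (2 * m + 1)).flatMap σ).length
      = (window x (-(m : ℤ)) (2 * m + 1)).flatMap σ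

/-- The base `B_n(a) = {τ_{0,n}(x) : x ∈ X^{(n)}_τ, x_0 = a}` of the Kakutani–Rokhlin tower. -/
def baseSet (τ : ∀ n, Alph (n + 1) → List (Alph n)) (n : ℕ) (a : Alph n) :
    Set (ℤ → Alph 0) :=
  {y | ∃ x ∈ levelShift τ n, x 0 = a ∧ SubstPoint (toZero τ n) x y}

/-- Recognizability: for every `n ≥ 1`, the sets `S^k B_n(a)`, `a ∈ A_n`,
`0 ≤ k < h_n(a)`, are pairwise disjoint. -/
def IsRecognizable (τ : ∀ n, Alph (n + 1) → List (Alph n)) : Prop :=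
  ∀ n : ℕ, 1 ≤ n → ∀ (a a' : Alph n) (k k' : ℕ),
    k < heightW τ n [a] → k' < heightW τ n [a'] → ¬(a = a' ∧ k = k') →
    Disjoint (shiftIter (k : ℤ) '' baseSet τ n a) (shiftIter (k' : ℤ) '' baseSet τ n a')

/-- `min_{a ∈ A_n} |τ_{0,n}(a)| → ∞`. -/
def IsEverywhereGrowing (τ : ∀ n, Alph (n + 1) → List (Alph n)) : Prop :=
  ∀ N : ℕ, ∃ M : ℕ, ∀ n, M ≤ n → ∀ a : Alph n, N ≤ (toZero τ n a).length

/-- Decisiveness of an everywhere growing directive sequence. -/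
def IsDecisive (τ : ∀ n, Alph (n + 1) → List (Alph n)) : Prop :=
  IsEverywhereGrowing τ ∧
  ∀ n : ℕ, ∃ l r : Alph (n + 1) → Alph n,
    ∀ a b : Alph (n + 1), [a, b] ∈ langOf (levelShift τ (n + 1)) →
      (τ n b).head? = some (r a) ∧ (τ n a).getLast? = some (l b)

/-- Unimodularity: every incidence matrix has determinant `±1`. -/
def IsUnimodularSeq [∀ n, Fintype (Alph n)] [∀ n, DecidableEq (Alph n)]
    (τ : ∀ n, Alph (n + 1) → List (Alph n)) : Prop :=
  ∀ n, ∃ e : Alph n ≃ Alph (n + 1),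
    (Matrix.det (Matrix.of fun b a : Alph n => ((τ n (e a)).count b : ℤ))).natAbs = 1

/-! ### Single substitutions -/

/-- Iteration `τ^m` of a substitution on a single alphabet, applied to a letter. -/
def substPow (τ : A → List A) : ℕ → A → List A
  | 0, a => [a]
  | k + 1, a => (τ a).flatMap (substPow τ k)

/-- The substitutive subshift `X_τ` generated by the constant directive sequence `(τ)`. -/
def substShift (τ : A → List A) : Set (ℤ → A) :=
  {x | ∀ (i : ℤ) (l : ℕ), ∃ m : ℕ, 1 ≤ m ∧ ∃ a : A, window x i l <:+: substPow τ m a}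

/-- The incidence matrix of a substitution (with real entries). -/
def incMat [DecidableEq A] (τ : A → List A) : Matrix A A ℝ :=
  Matrix.of fun b a => ((τ a).count b : ℝ)

/-- A primitive substitution: some power of its incidence matrix is strictly positive. -/
def IsPrimitiveSubst [Fintype A] [DecidableEq A] (τ : A → List A) : Prop :=
  ∃ k : ℕ, 0 < k ∧ ∀ b a : A, 0 < (incMat τ ^ k) b a

/-- Aperiodicity: `X_τ` contains no shift-periodic point. -/
def IsAperiodicSubst (τ : A → List A) : Prop :=
  ∀ x ∈ substShift τ, ∀ p : ℕ, 0 < p → shiftIter (p : ℤ) x ≠ x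

/-- The stable space `V_{X_τ}` of row vectors `v` with `v M_τ^n → 0`. -/
def stableSpace [Fintype A] [DecidableEq A] (τ : A → List A) : Submodule ℝ (A → ℝ) where
  carrier := {v | Tendsto (fun n : ℕ => Matrix.vecMul v (incMat τ ^ n)) atTop (nhds 0)}
  zero_mem' := by
    simp only [Set.mem_setOf_eq, Matrix.zero_vecMul]
    exact tendsto_const_nhds
  add_mem' := by
    intro u v hu hv
    have := hu.add hv
    simp only [Set.mem_setOf_eq] at *
    simpa [Matrix.add_vecMul] using this
  smul_mem' := by
    intro r v hv
    have := hv.const_smul r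
    simp only [Set.mem_setOf_eq] at *
    simpa [Matrix.smul_vecMul] using this

/-- `X` is balanced on the letter `a`. -/
def IsBalancedOnLetter [DecidableEq A] (X : Set (ℤ → A)) (a : A) : Prop :=
  ∃ C : ℕ, 0 < C ∧ ∀ w ∈ langOf X, ∀ w' ∈ langOf X, w.length = w'.length →
    |(w.count a : ℤ) - (w'.count a : ℤ)| ≤ (C : ℤ)

/-- `X` is balanced on letters. -/
def IsBalancedOnLetters [DecidableEq A] (X : Set (ℤ → A)) : Prop :=
  ∀ a : A, IsBalancedOnLetter X a

/-- A function `f : X → ℝ` is balanced on a (minimal) subshift `X`. -/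
def IsBalancedFn (X : Set (ℤ → A)) (f : (ℤ → A) → ℝ) : Prop :=
  ∃ C : ℝ, 0 < C ∧ ∀ x ∈ X, ∀ y ∈ X, ∀ n : ℕ, 1 ≤ n →
    |∑ i ∈ Finset.range (n + 1), (f (shiftIter (i : ℤ) x) - f (shiftIter (i : ℤ) y))| ≤ C

section Aux

variable {A : Type*}

lemma window_eq (x : ℤ → A) (i : ℤ) (l : ℕ) :
    window x i l = (List.range l).map (fun k : ℕ => x (i + (k : ℤ))) := by
  simp only [window, List.pure_def, List.bind_eq_flatMap, ← List.map_eq_flatMap, List.map_map]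
  rfl

lemma window_length' (x : ℤ → A) (i : ℤ) (l : ℕ) : (window x i l).length = l := by
  rw [window_eq]
  simp only [List.length_map, List.length_range]

lemma window_zero' (x : ℤ → A) (i : ℤ) : window x i 0 = [] := by
  rw [window_eq]
  simp

lemma window_succ' (x : ℤ → A) (i : ℤ) (l : ℕ) :
    window x i (l + 1) = window x i l ++ [x (i + l)] := by
  rw [window_eq, window_eq, List.range_succ]
  simp only [List.map_append, List.map_cons, List.map_nil]

lemma window_cons' (x : ℤ → A) (i : ℤ) (l : ℕ) :
    window x i (l + 1) = x i :: window x (i + 1) l := by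
  rw [window_eq, window_eq, List.range_succ_eq_map]
  simp only [List.map_cons, List.map_map]
  congr 1
  · norm_num
  · apply List.map_congr_left
    intro k _
    simp only [Function.comp_apply]
    congr 1
    push_cast
    ring

lemma window_append' (x : ℤ → A) (i : ℤ) (p q : ℕ) :
    window x i (p + q) = window x i p ++ window x (i + p) q := by
  induction q with
  | zero => simp [window_zero']
  | succ q ih =>
      have h1 : p + (q + 1) = (p + q) + 1 := by ring
      rw [h1, window_succ', ih, window_succ', List.append_assoc]
      congr 3
      push_cast
      ring

lemma window_getElem' (x : ℤ → A) (i : ℤ) (l : ℕ) (k : ℕ) (hk : k < (window x i l).length) :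
    (window x i l)[k] = x (i + k) := by
  simp only [window_eq, List.getElem_map, List.getElem_range]

lemma window_two (x : ℤ → A) (i : ℤ) : window x i 2 = [x i, x (i + 1)] := by
  rw [window_eq]
  simp [List.range_succ]

lemma window_mem_langOf {X : Set (ℤ → A)} {x : ℤ → A} (hx : x ∈ X) (i : ℤ) (l : ℕ) :
    window x i l ∈ langOf X := ⟨x, hx, i, by rw [window_length']⟩

lemma wsum_nil' (c : A → ℝ) : wsum c [] = 0 := rfl

lemma wsum_append' (c : A → ℝ) (u v : List A) : wsum c (u ++ v) = wsum c u + wsum c v := by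
  simp [wsum]

lemma wsum_cons' (c : A → ℝ) (a : A) (t : List A) : wsum c (a :: t) = c a + wsum c t := by
  simp [wsum]

lemma wsum_window_eq_sum (c : A → ℝ) (x : ℤ → A) (i : ℤ) (l : ℕ) :
    wsum c (window x i l) = ∑ k ∈ Finset.range l, c (x (i + k)) := by
  induction l with
  | zero => simp [window_zero', wsum]
  | succ l ih =>
      rw [window_succ', wsum_append', ih, Finset.sum_range_succ]
      simp [wsum]

/-- Key lemma: on a point of `X`, the `c`-sum between two occurrences of the same
letter vanishes, for any letter-coboundary `c`. -/
lemma key_sum_zero {X : Set (ℤ → A)} [TopologicalSpace A] {c : A → ℝ}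
    (hc : IsLetterCoboundary X c) {x : ℤ → A} (hx : x ∈ X) :
    ∀ l : ℕ, ∀ m : ℤ, x (m + l) = x m → wsum c (window x m l) = 0 := by
  intro l
  induction l using Nat.strong_induction_on with
  | _ l IH =>
    intro m hm
    rcases Nat.eq_zero_or_pos l with rfl | hl
    · simp [window_zero', wsum]
    · classical
      have hex : ∃ j : ℕ, 0 < j ∧ j ≤ l ∧ x (m + j) = x m := ⟨l, hl, le_refl l, hm⟩
      obtain ⟨hj0, hjl, hjx⟩ := Nat.find_spec hex
      set j := Nat.find hex with hjdef
      obtain ⟨jj, hjj⟩ : ∃ jj, j = jj + 1 := ⟨j - 1, by omega⟩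
      have hret : IsReturnWord X (x m) (window x m j) := by
        refine ⟨?_, ?_, ?_⟩
        · have h1 : window x m j ++ [x m] = window x m (j + 1) := by
            rw [window_succ', hjx]
          rw [h1]
          exact window_mem_langOf hx m (j + 1)
        · rw [hjj, window_cons']
          rfl
        · intro i h hi
          rw [List.get_eq_getElem, window_getElem']
          intro hcontra
          have hlen : i < j := by simpa [window_length'] using h
          exact Nat.find_min hex hlen ⟨hi, by omega, hcontra⟩
      have h1 : wsum c (window x m j) = 0 := hc _ _ hret
      have hsplit : window x m l = window x m j ++ window x (m + j) (l - j) := by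
        conv_lhs => rw [show l = j + (l - j) from by omega]
        exact window_append' x m j (l - j)
      have h2 : wsum c (window x (m + j) (l - j)) = 0 := by
        rcases eq_or_lt_of_le hjl with heq | hlt
        · have h0 : l - j = 0 := by omega
          rw [h0, window_zero', wsum_nil']
        · apply IH (l - j) (by omega) (m + j)
          have harg : (m + j) + ((l - j : ℕ) : ℤ) = m + l := by push_cast; omega
          rw [harg, hm, hjx]
      rw [hsplit, wsum_append', h1, h2, add_zero]

end Aux

/-- **Lemma 3.4.** Let `X` be a minimal subshift.  A morphism `c : A* → (ℝ, +)` is a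
letter-coboundary on `X` iff there is `ρ : A → ℝ` with `c(a) = ρ(b) − ρ(a)` for every
length-2 word `ab ∈ L(X)`. -/
theorem letterCoboundary_iff_exists_rho
    {A : Type*} [Fintype A] [TopologicalSpace A] [DiscreteTopology A]
    (X : Set (ℤ → A)) (hX : IsMinimalSubshift X) (c : A → ℝ) :
    IsLetterCoboundary X c ↔
      ∃ ρ : A → ℝ, ∀ a b : A, [a, b] ∈ langOf X → c a = ρ b - ρ a := by
  classical
  constructor
  · -- forward direction
    intro hc
    obtain ⟨x0, hx0⟩ := hX.2.1
    -- the potential function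
    set T : ℤ → ℝ :=
      fun n => wsum c (window x0 0 n.toNat) - wsum c (window x0 n (-n).toNat) with hT
    have Tstep : ∀ n : ℤ, T (n + 1) = T n + c (x0 n) := by
      intro n
      rcases le_or_gt 0 n with h | h
      · have h1 : (n + 1).toNat = n.toNat + 1 := by omega
        have h2 : (-n).toNat = 0 := by omega
        have h3 : (-(n + 1)).toNat = 0 := by omega
        have h4 : (0 : ℤ) + (n.toNat : ℤ) = n := by omega
        simp only [hT, h1, h2, h3, window_succ', wsum_append', h4]
        simp [window_zero', wsum_nil', wsum_cons', wsum]
      · have h1 : (n + 1).toNat = 0 := by omega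
        have h2 : n.toNat = 0 := by omega
        have h3 : (-n).toNat = (-(n + 1)).toNat + 1 := by omega
        simp only [hT, h1, h2, h3, window_cons', window_zero', wsum_nil', wsum_cons']
        ring
    have Tdiff : ∀ (l : ℕ) (m : ℤ), T (m + l) = T m + wsum c (window x0 m l) := by
      intro l
      induction l with
      | zero => intro m; simp [window_zero', wsum_nil']
      | succ l ih =>
          intro m
          have h1 : m + ((l : ℤ) + 1) = (m + l) + 1 := by ring
          push_cast
          rw [h1, Tstep, ih, window_succ', wsum_append', wsum_cons', wsum_nil']
          ring
    have Twd : ∀ m n : ℤ, x0 m = x0 n → T m = T n := by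
      have base : ∀ m n : ℤ, m ≤ n → x0 m = x0 n → T m = T n := by
        intro m n hmn hx
        have hn : n = m + ((n - m).toNat : ℤ) := by omega
        rw [hn, Tdiff, key_sum_zero hc hx0 _ m (by rw [← hn, ← hx]), add_zero]
      intro m n hx
      rcases le_total m n with h | h
      · exact base m n h hx
      · exact (base n m h hx.symm).symm
    -- every length-2 word of the language occurs in x0
    have occ2 : ∀ a b : A, [a, b] ∈ langOf X →
        ∃ n : ℤ, x0 n = a ∧ x0 (n + 1) = b := by
      intro a b hab
      obtain ⟨y, hy, i, hw⟩ := hab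
      rw [show ([a, b] : List A).length = 2 from rfl, window_two] at hw
      have hya : y i = a := by simpa using congrArg (fun l => l.head?) hw.symm
      have hyb : y (i + 1) = b := by
        have := hw
        simp only [List.cons.injEq] at this
        exact this.2.1.symm
      have hycl : y ∈ closure (orbit x0) := hX.2.2 x0 hx0 hy
      have hUopen : IsOpen {z : ℤ → A | z i = a ∧ z (i + 1) = b} := by
        have e1 : IsOpen ((fun z : ℤ → A => z i) ⁻¹' {a}) :=
          (continuous_apply i).isOpen_preimage _ (isOpen_discrete _)
        have e2 : IsOpen ((fun z : ℤ → A => z (i + 1)) ⁻¹' {b}) :=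
          (continuous_apply (i + 1)).isOpen_preimage _ (isOpen_discrete _)
        exact e1.inter e2
      have hyU : y ∈ {z : ℤ → A | z i = a ∧ z (i + 1) = b} := ⟨hya, hyb⟩
      obtain ⟨z, hzU, hzorb⟩ :=
        mem_closure_iff.mp hycl _ hUopen hyU
      obtain ⟨k, rfl⟩ := hzorb
      refine ⟨i + k, ?_, ?_⟩
      · exact hzU.1
      · have : i + k + 1 = i + 1 + k := by ring
        rw [this]
        exact hzU.2
    -- the choice of ρ
    refine ⟨fun a => if h : ∃ n : ℤ, x0 n = a then T h.choose else 0, ?_⟩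
    intro a b hab
    dsimp only
    obtain ⟨n, hna, hnb⟩ := occ2 a b hab
    have ha : ∃ m : ℤ, x0 m = a := ⟨n, hna⟩
    have hb : ∃ m : ℤ, x0 m = b := ⟨n + 1, hnb⟩
    have hρa : (if h : ∃ m : ℤ, x0 m = a then T h.choose else 0) = T n := by
      rw [dif_pos ha]
      exact Twd _ _ (by rw [ha.choose_spec, hna])
    have hρb : (if h : ∃ m : ℤ, x0 m = b then T h.choose else 0) = T (n + 1) := by
      rw [dif_pos hb]
      exact Twd _ _ (by rw [hb.choose_spec, hnb])
    rw [hρa, hρb, Tstep, hna]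
    ring
  · -- reverse direction
    rintro ⟨ρ, hρ⟩ a w ⟨hlang, hhead, -⟩
    obtain ⟨y, hy, i, hw⟩ := hlang
    have hlen : (w ++ [a]).length = w.length + 1 := by simp
    rw [hlen, window_succ'] at hw
    have hinj := List.append_inj hw (by rw [window_length'])
    have hw1 : w = window y i w.length := hinj.1
    have hw2 : a = y (i + w.length) := by
      have := hinj.2
      simpa using this
    rcases Nat.eq_zero_or_pos w.length with hL0 | hLpos
    · rw [hw1, hL0, window_zero', wsum_nil']
    · have hya : y i = a := by
        obtain ⟨L', hL'⟩ : ∃ L', w.length = L' + 1 := ⟨w.length - 1, by omega⟩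
        rw [hw1, hL', window_cons'] at hhead
        simpa using hhead
      rw [hw1, wsum_window_eq_sum]
      have hterm : ∀ k ∈ Finset.range w.length,
          c (y (i + k)) = ρ (y (i + (k + 1 : ℕ))) - ρ (y (i + k)) := by
        intro k _
        have hmem : [y (i + k), y (i + k + 1)] ∈ langOf X := by
          rw [← window_two]
          exact window_mem_langOf hy (i + k) 2
        have := hρ _ _ hmem
        rw [this]
        congr 2
        push_cast
        ring
      rw [Finset.sum_congr rfl hterm, Finset.sum_range_sub (fun k : ℕ => ρ (y (i + k)))]
      have h0 : i + ((0 : ℕ) : ℤ) = i := by norm_num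
      rw [h0, hya, ← hw2]
      ring

end SAdicPaper
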